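/- Let ν be a probability measure on ℝ^{d+2} supported in the domain where the convex l.s.c. energy e is finite, and suppose ⟨ν, e⟩ = e(⟨ν, id⟩) < ∞, where e is strictly convex on its domain of positivity {ρ > 0}. Then either ν is the Dirac measure at its barycenter, or ν is supported in the degenerate set {(ρ, m, S) : ρ = 0, m = 0, S ≤ 0}. -/

import Mathlib

open MeasureTheory
open scoped ENNReal

open Classical in
/-- The extended total energy `e(ρ, m, S)` with values in `[0, ∞]`. -/
noncomputable def energyExt (d : ℕ) (γ cv : ℝ) :
    ℝ × EuclideanSpace ℝ (Fin d) × ℝ → ℝ≥0∞ := fun x =>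
  if 0 < x.1 then
    ENNReal.ofReal (‖x.2.1‖ ^ 2 / (2 * x.1) + cv * x.1 ^ γ * Real.exp (x.2.2 / (cv * x.1)))
  else if x.1 = 0 ∧ x.2.1 = 0 ∧ x.2.2 ≤ 0 then 0 else ⊤



lemma lemB_le {γ l δ : ℝ} (hγ : 1 < γ) (hl : 0 < l) :
    l * δ + γ * l - γ + 1 ≤ l ^ γ * Real.exp δ := by
  have hrw : l ^ γ * Real.exp δ = l * Real.exp ((γ - 1) * Real.log l + δ) := by
    have h0 : l * Real.exp ((γ - 1) * Real.log l + δ)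
        = Real.exp (Real.log l) * Real.exp ((γ - 1) * Real.log l + δ) := by
      rw [Real.exp_log hl]
    rw [Real.rpow_def_of_pos hl, ← Real.exp_add, h0, ← Real.exp_add]
    congr 1; ring
  have h1 : (γ-1)*Real.log l + δ + 1 ≤ Real.exp ((γ-1)*Real.log l + δ) := Real.add_one_le_exp _
  have h2 : l - 1 ≤ l * Real.log l := by
    rcases eq_or_ne l 1 with h|h
    · simp [h]
    · have h3 := Real.log_lt_sub_one_of_pos (inv_pos.2 hl) (fun hh => h (by rwa [inv_eq_one] at hh))
      rw [Real.log_inv] at h3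
      have h4 := mul_lt_mul_of_pos_left h3 hl
      have h5 : l * l⁻¹ = 1 := mul_inv_cancel₀ hl.ne'
      nlinarith
  rw [hrw]
  nlinarith [mul_le_mul_of_nonneg_left h1 hl.le, mul_le_mul_of_nonneg_left h2 (by linarith : (0:ℝ) ≤ γ-1)]

lemma lemB_lt {γ l δ : ℝ} (hγ : 1 < γ) (hl : 0 < l) (hne : ¬ (l = 1 ∧ δ = 0)) :
    l * δ + γ * l - γ + 1 < l ^ γ * Real.exp δ := by
  have hrw : l ^ γ * Real.exp δ = l * Real.exp ((γ - 1) * Real.log l + δ) := by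
    have h0 : l * Real.exp ((γ - 1) * Real.log l + δ)
        = Real.exp (Real.log l) * Real.exp ((γ - 1) * Real.log l + δ) := by
      rw [Real.exp_log hl]
    rw [Real.rpow_def_of_pos hl, ← Real.exp_add, h0, ← Real.exp_add]
    congr 1; ring
  rcases eq_or_ne l 1 with h|h
  · subst h
    have hδ : δ ≠ 0 := fun hh => hne ⟨rfl, hh⟩
    have := Real.add_one_lt_exp hδ
    rw [Real.one_rpow]
    linarith
  · have h1 : (γ-1)*Real.log l + δ + 1 ≤ Real.exp ((γ-1)*Real.log l + δ) := Real.add_one_le_exp _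
    have h2 : l - 1 < l * Real.log l := by
      have h3 := Real.log_lt_sub_one_of_pos (inv_pos.2 hl) (fun hh => h (by rwa [inv_eq_one] at hh))
      rw [Real.log_inv] at h3
      have h4 := mul_lt_mul_of_pos_left h3 hl
      have h5 : l * l⁻¹ = 1 := mul_inv_cancel₀ hl.ne'
      nlinarith
    rw [hrw]
    nlinarith [mul_le_mul_of_nonneg_left h1 hl.le, mul_lt_mul_of_pos_left h2 (by linarith : (0:ℝ) < γ-1)]



open Classical in
noncomputable def EnReal (d : ℕ) (γ cv : ℝ) :
    ℝ × EuclideanSpace ℝ (Fin d) × ℝ → ℝ := fun x =>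
  if 0 < x.1 then ‖x.2.1‖ ^ 2 / (2 * x.1) + cv * x.1 ^ γ * Real.exp (x.2.2 / (cv * x.1)) else 0

noncomputable def gradE (d : ℕ) (γ cv : ℝ)
    (b y : ℝ × EuclideanSpace ℝ (Fin d) × ℝ) : ℝ :=
  (-(‖b.2.1‖ ^ 2 / (2 * b.1 ^ 2))
      + cv * (b.1 ^ (γ - 1) * Real.exp (b.2.2 / (cv * b.1))) * (γ - b.2.2 / (cv * b.1)))
      * (y.1 - b.1)
    + ((inner ℝ b.2.1 y.2.1 : ℝ) - ‖b.2.1‖ ^ 2) / b.1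
    + (b.1 ^ (γ - 1) * Real.exp (b.2.2 / (cv * b.1))) * (y.2.2 - b.2.2)

lemma gradE_self (d : ℕ) (γ cv : ℝ) (b : ℝ × EuclideanSpace ℝ (Fin d) × ℝ) :
    gradE d γ cv b b = 0 := by
  have h : (inner ℝ b.2.1 b.2.1 : ℝ) = ‖b.2.1‖ ^ 2 := real_inner_self_eq_norm_sq _
  simp [gradE, h]

lemma enreal_nonneg (d : ℕ) {γ cv : ℝ} (hcv : 0 < cv)
    (x : ℝ × EuclideanSpace ℝ (Fin d) × ℝ) : 0 ≤ EnReal d γ cv x := by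
  unfold EnReal
  split_ifs with h
  · have h1 : (0:ℝ) < x.1 ^ γ := Real.rpow_pos_of_pos h γ
    have h2 : (0:ℝ) < Real.exp (x.2.2 / (cv * x.1)) := Real.exp_pos _
    have h3 : (0:ℝ) ≤ ‖x.2.1‖ ^ 2 / (2 * x.1) := by positivity
    nlinarith [mul_pos (mul_pos hcv h1) h2]
  · exact le_refl 0

lemma enreal_measurable (d : ℕ) (γ cv : ℝ) : Measurable (EnReal d γ cv) := by
  unfold EnReal
  apply Measurable.ite (measurableSet_lt measurable_const measurable_fst)
  · apply Measurable.add
    · exact ((measurable_fst.comp measurable_snd).norm.pow_const 2).div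
        (measurable_const.mul measurable_fst)
    · exact (measurable_const.mul (measurable_fst.pow measurable_const)).mul
        (Real.measurable_exp.comp ((measurable_snd.comp measurable_snd).div
          (measurable_const.mul measurable_fst)))
  · exact measurable_const

lemma gradient_ineq {d : ℕ} {γ cv : ℝ} (hγ : 1 < γ) (hcv : cv = 1/(γ-1))
    {b y : ℝ × EuclideanSpace ℝ (Fin d) × ℝ} (hb : 0 < b.1)
    (hy : 0 < y.1 ∨ (y.1 = 0 ∧ y.2.1 = 0 ∧ y.2.2 ≤ 0)) (hne : y ≠ b) :
    EnReal d γ cv b + gradE d γ cv b y < EnReal d γ cv y := by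
  subst hcv
  have hγ1 : (0:ℝ) < γ - 1 := by linarith
  obtain ⟨ρ₀, m₀, S₀⟩ := b
  obtain ⟨ρ, m, S⟩ := y
  simp only [EnReal, gradE] at hb hy hne ⊢
  rw [if_pos hb]
  set A := ρ₀ ^ (γ - 1) with hAdef
  set X₀ := Real.exp (S₀ / (1/(γ-1) * ρ₀)) with hX₀def
  have hA : 0 < A := Real.rpow_pos_of_pos hb _
  have hX₀ : 0 < X₀ := Real.exp_pos _
  have hrg : ρ₀ ^ γ = A * ρ₀ := by
    rw [hAdef]
    have h := Real.rpow_add_one hb.ne' (γ - 1)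
    rw [show γ - 1 + 1 = γ by ring] at h
    exact h
  rcases hy with hρ | ⟨h1, h2, h3⟩
  · -- positive density case
    rw [if_pos hρ]
    set X := Real.exp (S / (1/(γ-1) * ρ)) with hXdef
    have hX : 0 < X := Real.exp_pos _
    have hPP2 : (ρ/ρ₀) ^ γ * Real.exp (S / (1/(γ-1) * ρ) - S₀ / (1/(γ-1) * ρ₀))
        = (ρ ^ γ * X) / (A * ρ₀ * X₀) := by
      rw [Real.div_rpow hρ.le hb.le, Real.exp_sub, ← hXdef, ← hX₀def, hrg]
      field_simp
    have hksq : ‖m - (ρ/ρ₀) • m₀‖ ^ 2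
        = ‖m‖ ^ 2 - 2*(ρ/ρ₀)*(inner ℝ m₀ m : ℝ) + (ρ/ρ₀)^2 * ‖m₀‖^2 := by
      rw [norm_sub_sq_real, real_inner_smul_right, real_inner_comm, norm_smul,
        Real.norm_eq_abs, mul_pow, sq_abs]
      ring
    have hid : (‖m‖ ^ 2 / (2 * ρ) + 1/(γ-1) * ρ ^ γ * X)
        - ((‖m₀‖ ^ 2 / (2 * ρ₀) + 1/(γ-1) * ρ₀ ^ γ * X₀)
          + ((-(‖m₀‖ ^ 2 / (2 * ρ₀ ^ 2))
              + 1/(γ-1) * (A * X₀) * (γ - S₀ / (1/(γ-1) * ρ₀))) * (ρ - ρ₀)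
            + ((inner ℝ m₀ m : ℝ) - ‖m₀‖ ^ 2) / ρ₀
            + (A * X₀) * (S - S₀)))
        = (‖m‖^2 - 2*(ρ/ρ₀)*(inner ℝ m₀ m : ℝ) + (ρ/ρ₀)^2 * ‖m₀‖^2) / (2*ρ)
          + (1/(γ-1)) * (A * ρ₀ * X₀)
            * ((ρ/ρ₀) ^ γ * Real.exp (S / (1/(γ-1) * ρ) - S₀ / (1/(γ-1) * ρ₀))
              - ((ρ/ρ₀) * (S / (1/(γ-1) * ρ) - S₀ / (1/(γ-1) * ρ₀)) + γ * (ρ/ρ₀) - γ + 1)) := by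
      rw [hPP2, hrg]
      field_simp
      ring
    have hpos : 0 < (1/(γ-1)) * (A * ρ₀ * X₀) := by positivity
    by_cases hm : m = (ρ/ρ₀) • m₀
    · have hnotone : ¬((ρ/ρ₀) = 1 ∧ (S / (1/(γ-1) * ρ) - S₀ / (1/(γ-1) * ρ₀)) = 0) := by
        rintro ⟨e1, e2⟩
        have hρeq : ρ = ρ₀ := by
          field_simp at e1; linarith
        rw [hρeq] at e2
        have hSeq : S = S₀ := by
          field_simp at e2
          have h' : (S - S₀) * (γ - 1) = 0 := by linear_combination e2
          rcases mul_eq_zero.1 h' with h'' | h''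
          · linarith
          · linarith
        have hmeq : m = m₀ := by
          rw [hρeq, div_self hb.ne'] at hm
          simpa using hm
        exact hne (by rw [hρeq, hSeq, hmeq])
      have hp := lemB_lt hγ (div_pos hρ hb) hnotone
      have hk0 : (‖m‖^2 - 2*(ρ/ρ₀)*(inner ℝ m₀ m : ℝ) + (ρ/ρ₀)^2 * ‖m₀‖^2) / (2*ρ) = 0 := by
        rw [← hksq, hm, sub_self, norm_zero]
        norm_num
      linarith [hid, mul_pos hpos (sub_pos.2 hp), hk0]
    · have hkpos : 0 < ‖m - (ρ/ρ₀) • m₀‖ ^ 2 := by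
        have h0 : m - (ρ/ρ₀) • m₀ ≠ 0 := sub_ne_zero.2 hm
        exact pow_pos (norm_pos_iff.2 h0) 2
      rw [hksq] at hkpos
      have hp := lemB_le hγ (div_pos hρ hb)
        (δ := S / (1/(γ-1) * ρ) - S₀ / (1/(γ-1) * ρ₀))
      linarith [hid, mul_nonneg hpos.le (sub_nonneg.2 hp),
        div_pos hkpos (by linarith : (0:ℝ) < 2*ρ)]
  · -- degenerate case
    rw [if_neg (by rw [h1]; exact lt_irrefl 0), h1, h2]
    have hz : (inner ℝ m₀ (0 : EuclideanSpace ℝ (Fin d)) : ℝ) = 0 := inner_zero_right m₀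
    have hkey : ‖m₀‖ ^ 2 / (2 * ρ₀) + 1 / (γ - 1) * ρ₀ ^ γ * X₀ +
        ((-(‖m₀‖ ^ 2 / (2 * ρ₀ ^ 2)) + 1 / (γ - 1) * (A * X₀) * (γ - S₀ / (1 / (γ - 1) * ρ₀))) * (0 - ρ₀) +
            ((inner ℝ m₀ (0 : EuclideanSpace ℝ (Fin d)) : ℝ) - ‖m₀‖ ^ 2) / ρ₀ +
          A * X₀ * (S - S₀)) = A * X₀ * (S - ρ₀) := by
      rw [hrg, hz]
      field_simp
      ring
    rw [hkey]
    exact mul_neg_of_pos_of_neg (by positivity) (by linarith)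

/-- Sharp form of Jensen's inequality: if equality holds in Jensen's inequality for the convex
energy `e`, which is strictly convex on `{ρ > 0}`, then the probability measure `ν` is either a
Dirac mass at its barycenter or is supported in the degenerate set
`{ρ = 0, m = 0, S ≤ 0}`. -/
theorem sharp_jensen_dirac_or_degenerate (d : ℕ) (hd : 1 ≤ d) (γ : ℝ) (hγ : 1 < γ)
    (cv : ℝ) (hcv : cv = 1 / (γ - 1))
    (ν : Measure (ℝ × EuclideanSpace ℝ (Fin d) × ℝ)) (hprob : IsProbabilityMeasure ν)
    -- `ν` is supported where `e` is finite:
    (hfin : ν {x | energyExt d γ cv x = ⊤} = 0)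
    -- the barycenter exists:
    (hIntId : Integrable (fun x => x) ν)
    -- equality in Jensen's inequality, with finite value:
    (hjensen : ∫⁻ x, energyExt d γ cv x ∂ν = energyExt d γ cv (∫ x, x ∂ν))
    (hfinval : energyExt d γ cv (∫ x, x ∂ν) ≠ ⊤) :
    ν = Measure.dirac (∫ x, x ∂ν) ∨
      ν {x | ¬(x.1 = 0 ∧ x.2.1 = 0 ∧ x.2.2 ≤ 0)} = 0 := by
  have hγ1 : (0:ℝ) < γ - 1 := by linarith
  have hcvpos : 0 < cv := by rw [hcv]; positivity
  set b := ∫ x, x ∂ν with hbdef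
  have hF : ∀ᵐ x ∂ν, 0 < x.1 ∨ (x.1 = 0 ∧ x.2.1 = 0 ∧ x.2.2 ≤ 0) := by
    have h0 : ∀ᵐ x ∂ν, energyExt d γ cv x ≠ ⊤ := by
      rw [ae_iff]
      simpa using hfin
    filter_upwards [h0] with x hx
    by_cases h1 : 0 < x.1
    · exact Or.inl h1
    · by_cases h2 : x.1 = 0 ∧ x.2.1 = 0 ∧ x.2.2 ≤ 0
      · exact Or.inr h2
      · exact absurd (by simp [energyExt, h1, h2]) hx
  have hI1 : Integrable (fun x => x.1) ν := by
    have := (ContinuousLinearMap.fst ℝ ℝ (EuclideanSpace ℝ (Fin d) × ℝ)).integrable_comp hIntId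
    simpa using this
  have hIm : Integrable (fun x => x.2.1) ν := by
    have := ((ContinuousLinearMap.fst ℝ (EuclideanSpace ℝ (Fin d)) ℝ).comp
      (ContinuousLinearMap.snd ℝ ℝ (EuclideanSpace ℝ (Fin d) × ℝ))).integrable_comp hIntId
    simpa using this
  have hI3 : Integrable (fun x => x.2.2) ν := by
    have := ((ContinuousLinearMap.snd ℝ (EuclideanSpace ℝ (Fin d)) ℝ).comp
      (ContinuousLinearMap.snd ℝ ℝ (EuclideanSpace ℝ (Fin d) × ℝ))).integrable_comp hIntId
    simpa using this
  have hb1 : ∫ x, x.1 ∂ν = b.1 := by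
    have := (ContinuousLinearMap.fst ℝ ℝ (EuclideanSpace ℝ (Fin d) × ℝ)).integral_comp_comm hIntId
    simpa using this
  have hbm : ∫ x, x.2.1 ∂ν = b.2.1 := by
    have := ((ContinuousLinearMap.fst ℝ (EuclideanSpace ℝ (Fin d)) ℝ).comp
      (ContinuousLinearMap.snd ℝ ℝ (EuclideanSpace ℝ (Fin d) × ℝ))).integral_comp_comm hIntId
    simpa using this
  have hb3 : ∫ x, x.2.2 ∂ν = b.2.2 := by
    have := ((ContinuousLinearMap.snd ℝ (EuclideanSpace ℝ (Fin d)) ℝ).comp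
      (ContinuousLinearMap.snd ℝ ℝ (EuclideanSpace ℝ (Fin d) × ℝ))).integral_comp_comm hIntId
    simpa using this
  have h1nonneg : 0 ≤ᵐ[ν] (fun x => x.1) := by
    filter_upwards [hF] with x hx
    rcases hx with h | ⟨h, _, _⟩
    · exact h.le
    · exact h.ge
  have hb1nonneg : 0 ≤ b.1 := by
    rw [← hb1]; exact integral_nonneg_of_ae h1nonneg
  rcases eq_or_lt_of_le hb1nonneg with hb10 | hb1pos
  · -- degenerate case
    right
    have hz : (fun x => x.1) =ᵐ[ν] 0 := by
      refine (integral_eq_zero_iff_of_nonneg_ae h1nonneg hI1).1 ?_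
      rw [hb1, ← hb10]
    have hdeg : ∀ᵐ x ∂ν, x.1 = 0 ∧ x.2.1 = 0 ∧ x.2.2 ≤ 0 := by
      filter_upwards [hF, hz] with x hx h0
      simp only [Pi.zero_apply] at h0
      rcases hx with h | h
      · exact absurd h0 (by positivity)
      · exact h
    exact ae_iff.1 hdeg
  · -- Dirac case
    left
    have hEe : ∀ᵐ x ∂ν, energyExt d γ cv x = ENNReal.ofReal (EnReal d γ cv x) := by
      filter_upwards [hF] with x hx
      rcases hx with h | ⟨h1, h2, h3⟩
      · simp [energyExt, EnReal, h]
      · have h0 : ¬ 0 < x.1 := by rw [h1]; exact lt_irrefl 0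
        simp [energyExt, EnReal, h0, h1, h2, h3]
    have hEb : energyExt d γ cv b = ENNReal.ofReal (EnReal d γ cv b) := by
      simp [energyExt, EnReal, hb1pos]
    have hlin : ∫⁻ x, ENNReal.ofReal (EnReal d γ cv x) ∂ν = ENNReal.ofReal (EnReal d γ cv b) := by
      rw [← lintegral_congr_ae hEe, hjensen, ← hEb]
    have hintE : Integrable (EnReal d γ cv) ν := by
      refine ⟨(enreal_measurable d γ cv).aestronglyMeasurable, ?_⟩
      rw [hasFiniteIntegral_iff_ofReal
        (Filter.Eventually.of_forall (enreal_nonneg d hcvpos))]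
      rw [hlin]
      exact ENNReal.ofReal_lt_top
    have hintegral : ∫ x, EnReal d γ cv x ∂ν = EnReal d γ cv b := by
      rw [integral_eq_lintegral_of_nonneg_ae
        (Filter.Eventually.of_forall (enreal_nonneg d hcvpos))
        (enreal_measurable d γ cv).aestronglyMeasurable, hlin,
        ENNReal.toReal_ofReal (enreal_nonneg d hcvpos b)]
    have hIinner : Integrable (fun x => (inner ℝ b.2.1 x.2.1 : ℝ)) ν := hIm.const_inner b.2.1
    set C1 : ℝ := -(‖b.2.1‖ ^ 2 / (2 * b.1 ^ 2))
      + cv * (b.1 ^ (γ - 1) * Real.exp (b.2.2 / (cv * b.1))) * (γ - b.2.2 / (cv * b.1)) with hC1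
    set C3 : ℝ := b.1 ^ (γ - 1) * Real.exp (b.2.2 / (cv * b.1)) with hC3
    have hf1 : Integrable (fun x => C1 * (x.1 - b.1)) ν :=
      (hI1.sub (integrable_const b.1)).const_mul _
    have hf2 : Integrable (fun x => ((inner ℝ b.2.1 x.2.1 : ℝ) - ‖b.2.1‖ ^ 2) / b.1) ν :=
      (hIinner.sub (integrable_const (‖b.2.1‖ ^ 2))).div_const b.1
    have hf3 : Integrable (fun x => C3 * (x.2.2 - b.2.2)) ν :=
      (hI3.sub (integrable_const b.2.2)).const_mul _
    have hf12 : Integrable (fun x => C1 * (x.1 - b.1)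
        + ((inner ℝ b.2.1 x.2.1 : ℝ) - ‖b.2.1‖ ^ 2) / b.1) ν := hf1.add hf2
    have hIgrad : Integrable (fun x => gradE d γ cv b x) ν := by
      unfold gradE
      rw [← hC1, ← hC3]
      exact hf12.add hf3
    have hsub1 : Integrable (fun x => x.1 - b.1) ν := hI1.sub (integrable_const b.1)
    have hsubi : Integrable (fun x => (inner ℝ b.2.1 x.2.1 : ℝ) - ‖b.2.1‖ ^ 2) ν :=
      hIinner.sub (integrable_const (‖b.2.1‖ ^ 2))
    have hsub3 : Integrable (fun x => x.2.2 - b.2.2) ν := hI3.sub (integrable_const b.2.2)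
    have hgradint : ∫ x, gradE d γ cv b x ∂ν = 0 := by
      unfold gradE
      rw [← hC1, ← hC3]
      rw [integral_add hf12 hf3, integral_add hf1 hf2,
        integral_const_mul, integral_const_mul, integral_div,
        integral_sub hI1 (integrable_const b.1),
        integral_sub hIinner (integrable_const (‖b.2.1‖ ^ 2)),
        integral_sub hI3 (integrable_const b.2.2),
        integral_const, integral_const, integral_const, hb1, hb3,
        integral_inner hIm b.2.1, hbm, probReal_univ,
        real_inner_self_eq_norm_sq]
      simp
    have hae0 : ∀ᵐ x ∂ν, EnReal d γ cv x - EnReal d γ cv b - gradE d γ cv b x = 0 := by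
      have hnn : 0 ≤ᵐ[ν] fun x => EnReal d γ cv x - EnReal d γ cv b - gradE d γ cv b x := by
        filter_upwards [hF] with x hx
        by_cases hxb : x = b
        · rw [hxb, gradE_self]
          simp
        · have := gradient_ineq hγ hcv hb1pos hx hxb
          simp only [Pi.zero_apply]
          linarith
      have hsubE : Integrable (fun x => EnReal d γ cv x - EnReal d γ cv b) ν :=
        hintE.sub (integrable_const _)
      have hInth : Integrable
          (fun x => EnReal d γ cv x - EnReal d γ cv b - gradE d γ cv b x) ν :=
        hsubE.sub hIgrad
      refine (integral_eq_zero_iff_of_nonneg_ae hnn hInth).1 ?_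
      rw [integral_sub hsubE hIgrad,
        integral_sub hintE (integrable_const (EnReal d γ cv b)), hintegral, hgradint,
        integral_const, probReal_univ]
      simp
    have haeb : ∀ᵐ x ∂ν, x = b := by
      filter_upwards [hF, hae0] with x hx h0
      by_contra hxb
      have := gradient_ineq hγ hcv hb1pos hx hxb
      linarith
    have hne0 : ν {x | ¬ (x = b)} = 0 := ae_iff.1 haeb
    ext s hs
    rw [Measure.dirac_apply' _ hs]
    by_cases hbs : b ∈ s
    · have hsc : ν sᶜ = 0 := by
        refine measure_mono_null ?_ hne0
        intro x hxc hxb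
        rw [hxb] at hxc
        exact hxc hbs
      have hs1 : ν s = 1 := by
        have h2 := measure_compl hs (measure_ne_top ν s)
        rw [measure_univ, hsc] at h2
        exact le_antisymm prob_le_one (tsub_eq_zero_iff_le.1 h2.symm)
      simp [Set.indicator_of_mem hbs, hs1]
    · have hs0 : ν s = 0 := by
        refine measure_mono_null ?_ hne0
        intro x hxs hxb
        rw [hxb] at hxs
        exact hbs hxs
      simp [Set.indicator_of_notMem hbs, hs0]
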